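/- There is an absolute constant C > 0 such that: for all c, D > 0, all α ∈ (0,1], and every finite Borel measure G on [0,∞), Σ_{l=0}^∞ (2l+1)^{1+2α}·C_l ≤ C·∫_{[0,∞)} e^{μ²/4} G(dμ). In particular, if ∫_{[0,∞)} e^{μ²/4} G(dμ) < ∞ then Σ_{l=0}^∞ (2l+1)^{1+2α}·C_l < ∞. -/

import Mathlib

open MeasureTheory Real Set

/-- Bessel function of the first kind of real order `ν`, via its power series
(with real powers; for `ν > 0` this gives `besselJ ν 0 = 0`). -/
noncomputable def besselJ (ν x : ℝ) : ℝ :=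
  ∑' n : ℕ, ((-1 : ℝ) ^ n / (n.factorial * Real.Gamma ((n : ℝ) + ν + 1))) *
    (x / 2) ^ (2 * (n : ℝ) + ν)

/-- The integrand `J_{l+1/2}(μ)² / μ`, with its value at `μ = 0` defined by
continuous extension (`2/π` for `l = 0`, `0` for `l ≥ 1`). -/
noncomputable def besselInt (l : ℕ) (μ : ℝ) : ℝ :=
  if μ = 0 then (if l = 0 then 2 / Real.pi else 0)
  else besselJ ((l : ℝ) + 1 / 2) μ ^ 2 / μ

lemma fact_mul_gamma_le (ν : ℝ) (hν : 0 ≤ ν) :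
    ∀ n : ℕ, (n.factorial : ℝ) * Real.Gamma (ν + 1) ≤ Real.Gamma ((n : ℝ) + ν + 1) := by
  intro n
  induction n with
  | zero => simp
  | succ n ih =>
    have hpos : (0 : ℝ) < (n : ℝ) + ν + 1 := by positivity
    have h1 : Real.Gamma (((n : ℕ) + 1 : ℕ) + ν + 1) = ((n : ℝ) + ν + 1) * Real.Gamma ((n : ℝ) + ν + 1) := by
      push_cast
      rw [show (n : ℝ) + 1 + ν + 1 = ((n : ℝ) + ν + 1) + 1 by ring, Real.Gamma_add_one hpos.ne']
    rw [h1]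
    have hG : 0 < Real.Gamma ((n : ℝ) + ν + 1) := Real.Gamma_pos_of_pos hpos
    calc ((n + 1).factorial : ℝ) * Real.Gamma (ν + 1)
        = ((n : ℝ) + 1) * ((n.factorial : ℝ) * Real.Gamma (ν + 1)) := by
          rw [Nat.factorial_succ]; push_cast; ring
      _ ≤ ((n : ℝ) + 1) * Real.Gamma ((n : ℝ) + ν + 1) := by
          apply mul_le_mul_of_nonneg_left ih (by positivity)
      _ ≤ ((n : ℝ) + ν + 1) * Real.Gamma ((n : ℝ) + ν + 1) := by nlinarith

lemma pow_div_fact_le_exp {x : ℝ} (hx : 0 ≤ x) (n : ℕ) : x ^ n / n.factorial ≤ Real.exp x := by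
  have h := Real.sum_le_exp_of_nonneg hx (n + 1)
  refine le_trans ?_ h
  have := Finset.single_le_sum (f := fun i : ℕ => x ^ i / i.factorial)
    (fun i _ => by positivity) (Finset.self_mem_range_succ n)
  simpa using this

lemma tsum_pow_div_fact_le_exp {x : ℝ} (hx : 0 ≤ x) :
    ∑' n : ℕ, x ^ n / n.factorial ≤ Real.exp x := by
  refine Summable.tsum_le_of_sum_le (Real.summable_pow_div_factorial x) fun s => ?_
  obtain ⟨N, hN⟩ := s.exists_nat_subset_range
  calc ∑ i ∈ s, x ^ i / i.factorial
      ≤ ∑ i ∈ Finset.range N, x ^ i / i.factorial :=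
        Finset.sum_le_sum_of_subset_of_nonneg hN (fun i _ _ => by positivity)
    _ ≤ Real.exp x := Real.sum_le_exp_of_nonneg hx N

lemma summable_sq_pow_div_fact (x : ℝ) (hx : 0 ≤ x) :
    Summable fun n : ℕ => (x ^ n / n.factorial) ^ 2 := by
  refine Summable.of_nonneg_of_le (fun n => by positivity) (fun n => ?_)
    ((Real.summable_pow_div_factorial x).mul_left (Real.exp x))
  have h1 := pow_div_fact_le_exp hx n
  have h2 : (0:ℝ) ≤ x ^ n / n.factorial := by positivity
  calc (x ^ n / n.factorial) ^ 2 = (x ^ n / n.factorial) * (x ^ n / n.factorial) := sq _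
    _ ≤ Real.exp x * (x ^ n / n.factorial) := by nlinarith

lemma tsum_sq_pow_div_fact_le (x : ℝ) (hx : 0 ≤ x) :
    ∑' n : ℕ, (x ^ n / n.factorial) ^ 2 ≤ Real.exp x * Real.exp x := by
  calc ∑' n : ℕ, (x ^ n / n.factorial) ^ 2
      ≤ ∑' n : ℕ, Real.exp x * (x ^ n / n.factorial) := by
        refine Summable.tsum_le_tsum (fun n => ?_) (summable_sq_pow_div_fact x hx)
          ((Real.summable_pow_div_factorial x).mul_left _)
        have h1 := pow_div_fact_le_exp hx n
        have h2 : (0:ℝ) ≤ x ^ n / n.factorial := by positivity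
        calc (x ^ n / n.factorial) ^ 2 = (x ^ n / n.factorial) * (x ^ n / n.factorial) := sq _
          _ ≤ Real.exp x * (x ^ n / n.factorial) := by nlinarith
    _ = Real.exp x * ∑' n : ℕ, x ^ n / n.factorial := tsum_mul_left
    _ ≤ Real.exp x * Real.exp x := by
        have := tsum_pow_div_fact_le_exp hx
        nlinarith [Real.exp_pos x]

lemma cube_le_nat (l : ℕ) : (2 * l + 1) ^ 3 ≤ 81 * 4 ^ l := by
  induction l with
  | zero => norm_num
  | succ n ih =>
    rcases Nat.lt_or_ge n 2 with h | h
    · interval_cases n <;> norm_num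
    · have key : (2 * (n + 1) + 1) ^ 3 ≤ 4 * (2 * n + 1) ^ 3 := by
        have h2 : 2 ≤ n := h
        nlinarith [sq_nonneg n, Nat.one_le_iff_ne_zero.mpr (by omega : n ≠ 0)]
      calc (2 * (n + 1) + 1) ^ 3 ≤ 4 * (2 * n + 1) ^ 3 := key
        _ ≤ 4 * (81 * 4 ^ n) := by omega
        _ = 81 * 4 ^ (n + 1) := by ring

lemma besselJ_abs_le (ν μ : ℝ) (hν : 0 ≤ ν) (hμ : 0 < μ) :
    |besselJ ν μ| ≤ (μ / 2) ^ ν * Real.exp μ / Real.Gamma (ν + 1) := by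
  set y : ℝ := μ / 2 with hy
  have hy0 : 0 < y := by positivity
  have hGν : 0 < Real.Gamma (ν + 1) := Real.Gamma_pos_of_pos (by linarith)
  set a : ℕ → ℝ := fun n => ((-1 : ℝ) ^ n / (n.factorial * Real.Gamma ((n : ℝ) + ν + 1))) *
    y ^ (2 * (n : ℝ) + ν) with ha
  set b : ℕ → ℝ := fun n => y ^ ν / Real.Gamma (ν + 1) * (y ^ n / n.factorial) ^ 2 with hb
  have habs : ∀ n, |a n| ≤ b n := by
    intro n
    have hGn : 0 < Real.Gamma ((n : ℝ) + ν + 1) := Real.Gamma_pos_of_pos (by positivity)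
    have hrw : y ^ (2 * (n : ℝ) + ν) = (y ^ n) ^ 2 * y ^ ν := by
      rw [Real.rpow_add hy0]
      congr 1
      rw [show (2 * (n : ℝ)) = ((2 * n : ℕ) : ℝ) by push_cast; ring, Real.rpow_natCast,
        show 2 * n = n * 2 by ring, pow_mul]
    have h1 : |a n| = (y ^ n) ^ 2 * y ^ ν / (n.factorial * Real.Gamma ((n : ℝ) + ν + 1)) := by
      rw [ha]
      simp only []
      rw [abs_mul, abs_div, abs_pow, abs_neg, abs_one, one_pow, hrw]
      rw [abs_of_pos (by positivity : (0:ℝ) < (n.factorial : ℝ) * Real.Gamma ((n : ℝ) + ν + 1)),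
        abs_of_pos (by positivity : (0:ℝ) < (y ^ n) ^ 2 * y ^ ν)]
      ring
    rw [h1, hb]
    have hkey := fact_mul_gamma_le ν hν n
    have hfac : (0:ℝ) < (n.factorial : ℝ) := by positivity
    rw [div_le_iff₀ (by positivity)]
    have expand : y ^ ν / Real.Gamma (ν + 1) * (y ^ n / n.factorial) ^ 2 *
        ((n.factorial : ℝ) * Real.Gamma ((n : ℝ) + ν + 1))
        = (y ^ n) ^ 2 * y ^ ν * (Real.Gamma ((n : ℝ) + ν + 1) / ((n.factorial : ℝ) * Real.Gamma (ν + 1))) := by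
      field_simp
    rw [expand]
    nlinarith [Real.rpow_pos_of_pos hy0 ν, pow_pos (pow_pos hy0 n) 2,
      (one_le_div (by positivity : (0:ℝ) < (n.factorial : ℝ) * Real.Gamma (ν + 1))).mpr hkey,
      mul_pos (pow_pos (pow_pos hy0 n) 2) (Real.rpow_pos_of_pos hy0 ν)]
  have hsb : Summable b := (summable_sq_pow_div_fact y hy0.le).mul_left _
  have hsa : Summable fun n => |a n| :=
    Summable.of_nonneg_of_le (fun n => abs_nonneg _) habs hsb
  have h2 : |besselJ ν μ| ≤ ∑' n, |a n| := by
    have hsa' : Summable fun n => ‖a n‖ := by simpa [Real.norm_eq_abs] using hsa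
    have := norm_tsum_le_tsum_norm (f := a) hsa'
    simp only [Real.norm_eq_abs] at this
    exact this
  have h3 : ∑' n, |a n| ≤ ∑' n, b n := Summable.tsum_le_tsum habs hsa hsb
  have h4 : ∑' n, b n = y ^ ν / Real.Gamma (ν + 1) * ∑' n, (y ^ n / n.factorial) ^ 2 :=
    tsum_mul_left
  have h5 : ∑' n, (y ^ n / n.factorial) ^ 2 ≤ Real.exp μ := by
    have := tsum_sq_pow_div_fact_le y hy0.le
    rwa [← Real.exp_add, show y + y = μ by rw [hy]; ring] at this
  calc |besselJ ν μ| ≤ ∑' n, b n := h2.trans h3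
    _ = y ^ ν / Real.Gamma (ν + 1) * ∑' n, (y ^ n / n.factorial) ^ 2 := h4
    _ ≤ y ^ ν / Real.Gamma (ν + 1) * Real.exp μ := by
        apply mul_le_mul_of_nonneg_left h5 (by positivity)
    _ = y ^ ν * Real.exp μ / Real.Gamma (ν + 1) := by ring

lemma gamma_three_half : Real.Gamma (3 / 2 : ℝ) = Real.sqrt π / 2 := by
  have : (3 / 2 : ℝ) = 1 / 2 + 1 := by norm_num
  rw [this, Real.Gamma_add_one (by norm_num), Real.Gamma_one_half_eq]
  ring

lemma gamma_l_three_half_pos (l : ℕ) : 0 < Real.Gamma ((l : ℝ) + 3 / 2) :=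
  Real.Gamma_pos_of_pos (by positivity)

lemma gamma_l_three_half_ge (l : ℕ) :
    (l.factorial : ℝ) / 2 ≤ Real.Gamma ((l : ℝ) + 3 / 2) := by
  have h := fact_mul_gamma_le (1 / 2) (by norm_num) l
  rw [show (1 / 2 : ℝ) + 1 = 3 / 2 by norm_num, gamma_three_half] at h
  have h2 : (1 : ℝ) ≤ Real.sqrt π := by
    rw [show (1:ℝ) = Real.sqrt 1 by simp]
    exact Real.sqrt_le_sqrt (by linarith [Real.pi_gt_three])
  have h3 : ((l : ℝ) + 1 / 2 + 1) = (l : ℝ) + 3 / 2 := by ring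
  rw [h3] at h
  have hf : (0:ℝ) ≤ (l.factorial : ℝ) := by positivity
  nlinarith

lemma besselInt_le (l : ℕ) (μ : ℝ) (hμ : 0 ≤ μ) :
    besselInt l μ ≤ (μ ^ 2 / 4) ^ l * Real.exp (2 * μ) / (2 * Real.Gamma ((l : ℝ) + 3 / 2) ^ 2) := by
  have hG := gamma_l_three_half_pos l
  rcases eq_or_lt_of_le hμ with h0 | hpos
  · -- μ = 0
    rw [besselInt, if_pos h0.symm]
    rcases Nat.eq_zero_or_pos l with hl | hl
    · subst hl
      rw [if_pos rfl, ← h0]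
      have : Real.Gamma ((0 : ℕ) + 3 / 2 : ℝ) = Real.sqrt π / 2 := by
        rw [show ((0 : ℕ) + 3 / 2 : ℝ) = 3/2 by norm_num, gamma_three_half]
      rw [this]
      have hπ : 0 < π := Real.pi_pos
      have hsq : Real.sqrt π ^ 2 = π := Real.sq_sqrt hπ.le
      rw [show ((0:ℝ)^2/4)^(0:ℕ) = 1 by norm_num, show (2*(0:ℝ)) = 0 by ring, Real.exp_zero]
      rw [show (1:ℝ) * 1 / (2 * (Real.sqrt π / 2) ^ 2) = 2 / π by
        field_simp
        nlinarith]
    · rw [if_neg (by omega)]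
      positivity
  · -- μ > 0
    rw [besselInt, if_neg hpos.ne']
    set ν : ℝ := (l : ℝ) + 1 / 2 with hν
    have hν0 : 0 ≤ ν := by positivity
    have hJ := besselJ_abs_le ν μ hν0 hpos
    have hB : 0 ≤ (μ / 2) ^ ν * Real.exp μ / Real.Gamma (ν + 1) := by
      have := Real.Gamma_pos_of_pos (show 0 < ν + 1 by positivity)
      positivity
    have hsq : besselJ ν μ ^ 2 ≤ ((μ / 2) ^ ν * Real.exp μ / Real.Gamma (ν + 1)) ^ 2 := by
      rw [← sq_abs]
      exact pow_le_pow_left₀ (abs_nonneg _) hJ 2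
    have hν1 : ν + 1 = (l : ℝ) + 3 / 2 := by rw [hν]; ring
    have hrpow : ((μ / 2) ^ ν) ^ 2 = (μ ^ 2 / 4) ^ l * (μ / 2) := by
      have hy : (0:ℝ) < μ / 2 := by linarith
      rw [hν, Real.rpow_add hy, Real.rpow_natCast]
      rw [mul_pow, ← pow_mul, show l * 2 = 2 * l by ring, pow_mul]
      rw [show ((μ/2)^2 : ℝ) = μ^2/4 by ring]
      congr 1
      rw [← Real.rpow_natCast ((μ/2)^((1:ℝ)/2)) 2, ← Real.rpow_mul hy.le]
      norm_num
    calc besselJ ν μ ^ 2 / μ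
        ≤ ((μ / 2) ^ ν * Real.exp μ / Real.Gamma (ν + 1)) ^ 2 / μ := by
          gcongr
      _ = (μ ^ 2 / 4) ^ l * Real.exp (2 * μ) / (2 * Real.Gamma ((l : ℝ) + 3 / 2) ^ 2) := by
          rw [div_pow, mul_pow, hrpow, hν1]
          have he : Real.exp μ ^ 2 = Real.exp (2 * μ) := by
            rw [← Real.exp_nat_mul]; norm_num
          rw [he]
          field_simp

lemma besselInt_nonneg (l : ℕ) {μ : ℝ} (hμ : 0 ≤ μ) : 0 ≤ besselInt l μ := by
  rw [besselInt]
  rcases eq_or_lt_of_le hμ with h0 | hpos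
  · rw [if_pos h0.symm]
    rcases Nat.eq_zero_or_pos l with hl | hl
    · subst hl; rw [if_pos rfl]; positivity
    · rw [if_neg (by omega)]
  · rw [if_neg hpos.ne']
    positivity

lemma besselInt_nonpos (l : ℕ) {μ : ℝ} (hμ : μ < 0) : besselInt l μ ≤ 0 := by
  rw [besselInt, if_neg hμ.ne]
  exact div_nonpos_of_nonneg_of_nonpos (sq_nonneg _) hμ.le

lemma term_bound (α : ℝ) (hα1 : 0 < α) (hα2 : α ≤ 1) (μ : ℝ) (hμ : 0 ≤ μ) (l : ℕ) :
    2 * π ^ 2 * (2 * (l : ℝ) + 1) ^ (1 + 2 * α) * besselInt l μ ≤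
      324 * π ^ 2 * Real.exp (2 * μ) * (μ ^ l / l.factorial) ^ 2 := by
  have hπ := Real.pi_pos
  have hGp := gamma_l_three_half_pos l
  have hGl := gamma_l_three_half_ge l
  have hfl : (0:ℝ) < (l.factorial : ℝ) := by positivity
  have hb1 : (1:ℝ) ≤ 2 * (l : ℝ) + 1 := by
    have : (0:ℝ) ≤ (l:ℝ) := Nat.cast_nonneg l
    linarith
  have hk0 : (0:ℝ) ≤ 2 * π ^ 2 * (2 * (l : ℝ) + 1) ^ (1 + 2 * α) := by positivity
  have hkb : 2 * π ^ 2 * (2 * (l : ℝ) + 1) ^ (1 + 2 * α) ≤ 2 * π ^ 2 * (81 * (4:ℝ) ^ l) := by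
    have h1 : (2 * (l : ℝ) + 1) ^ (1 + 2 * α) ≤ (2 * (l : ℝ) + 1) ^ (3:ℝ) :=
      Real.rpow_le_rpow_of_exponent_le hb1 (by linarith)
    have h2 : (2 * (l : ℝ) + 1) ^ (3:ℝ) = (2 * (l : ℝ) + 1) ^ (3:ℕ) := by
      rw [show (3:ℝ) = ((3:ℕ):ℝ) by norm_num, Real.rpow_natCast]
    have h3 : (2 * (l : ℝ) + 1) ^ (3:ℕ) ≤ 81 * (4:ℝ) ^ l := by
      have := cube_le_nat l
      exact_mod_cast this
    rw [h2] at h1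
    exact mul_le_mul_of_nonneg_left (h1.trans h3) (by positivity : (0:ℝ) ≤ 2 * π ^ 2)
  set B : ℝ := (μ ^ 2 / 4) ^ l * Real.exp (2 * μ) / (2 * Real.Gamma ((l : ℝ) + 3 / 2) ^ 2) with hB
  have hB0 : 0 ≤ B := by positivity
  have hpow : (4:ℝ) ^ l * (μ ^ 2 / 4) ^ l = (μ ^ l) ^ 2 := by
    rw [← mul_pow, show (4:ℝ) * (μ^2/4) = μ^2 by ring, ← pow_mul,
      show 2 * l = l * 2 by ring, pow_mul]
  have hBle : B ≤ (μ ^ 2 / 4) ^ l * Real.exp (2 * μ) * (2 / (l.factorial : ℝ) ^ 2) := by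
    rw [hB, div_eq_mul_inv]
    apply mul_le_mul_of_nonneg_left _ (by positivity)
    rw [inv_le_iff_one_le_mul₀ (by positivity), div_mul_eq_mul_div, le_div_iff₀ (by positivity)]
    nlinarith [mul_le_mul hGl hGl (by positivity) hGp.le]
  calc 2 * π ^ 2 * (2 * (l : ℝ) + 1) ^ (1 + 2 * α) * besselInt l μ
      ≤ 2 * π ^ 2 * (2 * (l : ℝ) + 1) ^ (1 + 2 * α) * B :=
        mul_le_mul_of_nonneg_left (besselInt_le l μ hμ) hk0
    _ ≤ 2 * π ^ 2 * (81 * (4:ℝ) ^ l) * B := mul_le_mul_of_nonneg_right hkb hB0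
    _ ≤ 2 * π ^ 2 * (81 * (4:ℝ) ^ l) * ((μ ^ 2 / 4) ^ l * Real.exp (2 * μ) * (2 / (l.factorial : ℝ) ^ 2)) := by
        apply mul_le_mul_of_nonneg_left hBle (by positivity)
    _ = 324 * π ^ 2 * Real.exp (2 * μ) * (μ ^ l / l.factorial) ^ 2 := by
        have hpw2 : (μ ^ 2) ^ l = (μ ^ l) ^ 2 := by
          rw [← pow_mul, ← pow_mul, mul_comm]
        rw [div_pow, div_pow, hpw2]
        field_simp
        ring

lemma key_pointwise (α : ℝ) (hα1 : 0 < α) (hα2 : α ≤ 1) (μ : ℝ) :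
    ∑' l : ℕ, ENNReal.ofReal (2 * π ^ 2 * (2 * (l : ℝ) + 1) ^ (1 + 2 * α)) *
        ENNReal.ofReal (besselInt l μ)
      ≤ ENNReal.ofReal (324 * π ^ 2 * Real.exp 16 * Real.exp (μ ^ 2 / 4)) := by
  rcases lt_or_ge μ 0 with hneg | hμ
  · have h0 : ∀ l : ℕ, ENNReal.ofReal (besselInt l μ) = 0 := fun l =>
      ENNReal.ofReal_eq_zero.mpr (besselInt_nonpos l hneg)
    simp [h0]
  · set d : ℕ → ℝ := fun l => 324 * π ^ 2 * Real.exp (2 * μ) * (μ ^ l / l.factorial) ^ 2 with hd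
    set T : ℕ → ℝ := fun l => 2 * π ^ 2 * (2 * (l : ℝ) + 1) ^ (1 + 2 * α) * besselInt l μ with hT
    have hT0 : ∀ l, 0 ≤ T l := fun l => mul_nonneg (by positivity) (besselInt_nonneg l hμ)
    have hTd : ∀ l, T l ≤ d l := fun l => term_bound α hα1 hα2 μ hμ l
    have hsd : Summable d := (summable_sq_pow_div_fact μ hμ).mul_left _
    have hsT : Summable T := Summable.of_nonneg_of_le hT0 hTd hsd
    have hreal : ∑' l, T l ≤ 324 * π ^ 2 * Real.exp 16 * Real.exp (μ ^ 2 / 4) := by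
      have h1 : ∑' l, T l ≤ ∑' l, d l := Summable.tsum_le_tsum hTd hsT hsd
      have h2 : ∑' l, d l = 324 * π ^ 2 * Real.exp (2 * μ) *
          ∑' l : ℕ, (μ ^ l / l.factorial) ^ 2 := tsum_mul_left
      have h3 := tsum_sq_pow_div_fact_le μ hμ
      have h4 : 324 * π ^ 2 * Real.exp (2 * μ) * (Real.exp μ * Real.exp μ)
          ≤ 324 * π ^ 2 * Real.exp 16 * Real.exp (μ ^ 2 / 4) := by
        have e1 : Real.exp (2 * μ) * (Real.exp μ * Real.exp μ) = Real.exp (2 * μ + (μ + μ)) := by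
          rw [← Real.exp_add, ← Real.exp_add]
        have e2 : Real.exp (16 : ℝ) * Real.exp (μ ^ 2 / 4) = Real.exp (16 + μ ^ 2 / 4) := by
          rw [← Real.exp_add]
        have hle : Real.exp (2 * μ + (μ + μ)) ≤ Real.exp (16 + μ ^ 2 / 4) :=
          Real.exp_le_exp.mpr (by nlinarith [sq_nonneg (μ - 8)])
        have hπ := Real.pi_pos
        calc 324 * π ^ 2 * Real.exp (2 * μ) * (Real.exp μ * Real.exp μ)
            = 324 * π ^ 2 * Real.exp (2 * μ + (μ + μ)) := by rw [← e1]; ring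
          _ ≤ 324 * π ^ 2 * Real.exp (16 + μ ^ 2 / 4) := by
              apply mul_le_mul_of_nonneg_left hle (by positivity)
          _ = 324 * π ^ 2 * Real.exp 16 * Real.exp (μ ^ 2 / 4) := by rw [← e2]; ring
      calc ∑' l, T l ≤ ∑' l, d l := h1
        _ = 324 * π ^ 2 * Real.exp (2 * μ) * ∑' l : ℕ, (μ ^ l / l.factorial) ^ 2 := h2
        _ ≤ 324 * π ^ 2 * Real.exp (2 * μ) * (Real.exp μ * Real.exp μ) := by
            apply mul_le_mul_of_nonneg_left h3 (by positivity)
        _ ≤ _ := h4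
    calc ∑' l : ℕ, ENNReal.ofReal (2 * π ^ 2 * (2 * (l : ℝ) + 1) ^ (1 + 2 * α)) *
            ENNReal.ofReal (besselInt l μ)
        = ∑' l : ℕ, ENNReal.ofReal (T l) := by
          refine tsum_congr fun l => ?_
          rw [hT]
          exact (ENNReal.ofReal_mul (by positivity)).symm
      _ = ENNReal.ofReal (∑' l, T l) := (ENNReal.ofReal_tsum_of_nonneg hT0 hsT).symm
      _ ≤ _ := ENNReal.ofReal_le_ofReal hreal

lemma tsum_lintegral_le (f : ℕ → ℝ → ENNReal) (ν : Measure ℝ) :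
    ∑' l : ℕ, ∫⁻ x, f l x ∂ν ≤ ∫⁻ x, ∑' l : ℕ, f l x ∂ν := by
  rw [ENNReal.tsum_eq_iSup_sum]
  refine iSup_le fun s => ?_
  have h1 : ∑ l ∈ s, ∫⁻ x, f l x ∂ν ≤ ∫⁻ x, ∑ l ∈ s, f l x ∂ν := by
    classical
    induction s using Finset.induction_on with
    | empty => simp
    | insert a s hnotmem ih =>
      rw [Finset.sum_insert hnotmem]
      simp only [Finset.sum_insert hnotmem]
      calc ∫⁻ x, f a x ∂ν + ∑ l ∈ s, ∫⁻ x, f l x ∂ν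
          ≤ ∫⁻ x, f a x ∂ν + ∫⁻ x, ∑ l ∈ s, f l x ∂ν := add_le_add_right ih _
        _ ≤ ∫⁻ x, f a x + ∑ l ∈ s, f l x ∂ν := le_lintegral_add _ _
  exact h1.trans (lintegral_mono fun x => ENNReal.sum_le_tsum s)

/-- Angular power spectrum `C_l = C_l(0,0) = 2π² ∫ J_{l+1/2}(μ)²/μ G(dμ)` of the
initial random condition. -/
noncomputable def Cl0 (G : MeasureTheory.Measure ℝ) (l : ℕ) : ℝ :=
  2 * Real.pi ^ 2 * ∫ μ in Set.Ici (0 : ℝ), besselInt l μ ∂G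

/-- There is an absolute constant `C > 0` such that for all `c, D > 0`,
`α ∈ (0,1]` and every finite Borel measure `G` on `[0,∞)`,
`Σ (2l+1)^{1+2α} C_l ≤ C ∫ e^{μ²/4} G(dμ)` (in `ℝ≥0∞`, so in particular the series
converges whenever the integral is finite). -/
theorem spectrum_sum_le_exp_integral :
    ∃ C : ℝ, 0 < C ∧
      ∀ c D α : ℝ, 0 < c → 0 < D → 0 < α → α ≤ 1 →
        ∀ G : MeasureTheory.Measure ℝ, MeasureTheory.IsFiniteMeasure G →
          G (Set.Iio 0) = 0 →
          ∑' l : ℕ, ENNReal.ofReal ((2 * (l : ℝ) + 1) ^ (1 + 2 * α) * Cl0 G l)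
            ≤ ENNReal.ofReal C *
              ∫⁻ μ in Set.Ici (0 : ℝ), ENNReal.ofReal (Real.exp (μ ^ 2 / 4)) ∂G := by
  refine ⟨324 * π ^ 2 * Real.exp 16, by positivity, ?_⟩
  intro c D α hc hD hα1 hα2 G hGfin hG0
  have hC0 : (0:ℝ) ≤ 324 * π ^ 2 * Real.exp 16 := by positivity
  have step1 : ∀ l : ℕ,
      ENNReal.ofReal ((2 * (l : ℝ) + 1) ^ (1 + 2 * α) * Cl0 G l) ≤
        ENNReal.ofReal (2 * π ^ 2 * (2 * (l : ℝ) + 1) ^ (1 + 2 * α)) *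
          ∫⁻ x in Set.Ici (0:ℝ), ENNReal.ofReal (besselInt l x) ∂G := by
    intro l
    have hb0 : (0:ℝ) ≤ 2 * (l : ℝ) + 1 := by positivity
    have hk : (0:ℝ) ≤ 2 * π ^ 2 * (2 * (l : ℝ) + 1) ^ (1 + 2 * α) := by positivity
    have hre : (2 * (l : ℝ) + 1) ^ (1 + 2 * α) * Cl0 G l =
        2 * π ^ 2 * (2 * (l : ℝ) + 1) ^ (1 + 2 * α) *
          ∫ x in Set.Ici (0:ℝ), besselInt l x ∂G := by
      rw [Cl0]; ring
    rw [hre, ENNReal.ofReal_mul hk]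
    by_cases hInt : Integrable (besselInt l) (G.restrict (Set.Ici (0:ℝ)))
    · have hnn : 0 ≤ᵐ[G.restrict (Set.Ici (0:ℝ))] besselInt l := by
        filter_upwards [self_mem_ae_restrict (measurableSet_Ici : MeasurableSet (Set.Ici (0:ℝ)))]
          with x hx using besselInt_nonneg l hx
      rw [ofReal_integral_eq_lintegral_ofReal hInt hnn]
    · rw [integral_undef hInt]
      simp
  calc ∑' l : ℕ, ENNReal.ofReal ((2 * (l : ℝ) + 1) ^ (1 + 2 * α) * Cl0 G l)
      ≤ ∑' l : ℕ, ENNReal.ofReal (2 * π ^ 2 * (2 * (l : ℝ) + 1) ^ (1 + 2 * α)) *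
          ∫⁻ x in Set.Ici (0:ℝ), ENNReal.ofReal (besselInt l x) ∂G :=
        ENNReal.tsum_le_tsum step1
    _ = ∑' l : ℕ, ∫⁻ x in Set.Ici (0:ℝ),
          ENNReal.ofReal (2 * π ^ 2 * (2 * (l : ℝ) + 1) ^ (1 + 2 * α)) *
            ENNReal.ofReal (besselInt l x) ∂G :=
        tsum_congr fun l => (lintegral_const_mul' _ _ ENNReal.ofReal_ne_top).symm
    _ ≤ ∫⁻ x in Set.Ici (0:ℝ), ∑' l : ℕ,
          ENNReal.ofReal (2 * π ^ 2 * (2 * (l : ℝ) + 1) ^ (1 + 2 * α)) *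
            ENNReal.ofReal (besselInt l x) ∂G :=
        tsum_lintegral_le _ _
    _ ≤ ∫⁻ x in Set.Ici (0:ℝ),
          ENNReal.ofReal (324 * π ^ 2 * Real.exp 16 * Real.exp (x ^ 2 / 4)) ∂G :=
        lintegral_mono fun x => key_pointwise α hα1 hα2 x
    _ = ENNReal.ofReal (324 * π ^ 2 * Real.exp 16) *
          ∫⁻ x in Set.Ici (0:ℝ), ENNReal.ofReal (Real.exp (x ^ 2 / 4)) ∂G := by
        rw [← lintegral_const_mul' _ _ ENNReal.ofReal_ne_top]
        exact lintegral_congr fun x => ENNReal.ofReal_mul hC0
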